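/- If I ⊂ K[x_0,...,x_n] is a strongly stable ideal with Hilbert polynomial p(t), then the ideal I' = (x_0, I) ∩ K[x_1,...,x_n] is a strongly stable ideal of K[x_1,...,x_n] whose quotient has Hilbert polynomial Δp(t) = p(t) − p(t−1). -/

import Mathlib

open MvPolynomial

/-- The increasing elementary move `e_i^+` on exponent vectors:
it sends `x^α` (with `α_i > 0`) to `x_{i+1} · x^α / x_i`. -/
noncomputable def upMove {n : ℕ} (i : Fin n) (α : Fin (n + 1) →₀ ℕ) : Fin (n + 1) →₀ ℕ :=
  α - Finsupp.single i.castSucc 1 + Finsupp.single i.succ 1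

/-- A monomial ideal: every monomial appearing in an element of `I` lies in `I`. -/
def IsMonomialIdeal {n : ℕ} {K : Type*} [Field K]
    (I : Ideal (MvPolynomial (Fin (n + 1)) K)) : Prop :=
  ∀ f ∈ I, ∀ d ∈ f.support, (monomial d (1 : K)) ∈ I

/-- A strongly stable ideal: a monomial ideal closed under admissible increasing
elementary moves. -/
def IsStronglyStable {n : ℕ} {K : Type*} [Field K]
    (I : Ideal (MvPolynomial (Fin (n + 1)) K)) : Prop :=
  IsMonomialIdeal I ∧
    ∀ α : Fin (n + 1) →₀ ℕ, monomial α (1 : K) ∈ I →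
      ∀ i : Fin n, 0 < α i.castSucc → monomial (upMove i α) (1 : K) ∈ I

/-- The Hilbert function of `K[x_0,…,x_n]/I` in degree `t`:
the `K`-dimension of the degree-`t` graded piece of the quotient. -/
noncomputable def hilbFun {n : ℕ} {K : Type*} [Field K]
    (I : Ideal (MvPolynomial (Fin (n + 1)) K)) (t : ℕ) : ℕ :=
  Module.finrank K
    (↥(homogeneousSubmodule (Fin (n + 1)) K t) ⧸
      (Submodule.comap (homogeneousSubmodule (Fin (n + 1)) K t).subtype
        (I.restrictScalars K)))

section Helpers

variable {m : ℕ} {K : Type*} [Field K]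

lemma mono_mem_of_le {I : Ideal (MvPolynomial (Fin (m + 1)) K)} {a b : Fin (m + 1) →₀ ℕ}
    (ha : monomial a (1 : K) ∈ I) (h : a ≤ b) : monomial b (1 : K) ∈ I := by
  have : monomial b (1 : K) = monomial (b - a) (1 : K) * monomial a (1 : K) := by
    rw [monomial_mul, one_mul, tsub_add_cancel_of_le h]
  rw [this]
  exact I.mul_mem_left _ ha

lemma exists_monomial_gens {I : Ideal (MvPolynomial (Fin (m + 1)) K)} (hIm : IsMonomialIdeal I) :
    ∃ G : Finset (Fin (m + 1) →₀ ℕ), (∀ g ∈ G, monomial g (1 : K) ∈ I) ∧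
      ∀ β : Fin (m + 1) →₀ ℕ, monomial β (1 : K) ∈ I → ∃ g ∈ G, g ≤ β := by
  obtain ⟨S, hS⟩ := IsNoetherian.noetherian I
  refine ⟨S.biUnion fun f => f.support, ?_, ?_⟩
  · intro g hg
    obtain ⟨f, hfS, hgf⟩ := Finset.mem_biUnion.mp hg
    have hfI : f ∈ I := by
      rw [← hS]; exact Submodule.subset_span hfS
    exact hIm f hfI g hgf
  · intro β hβ
    have hIle : I ≤ Ideal.span ((fun s => monomial s (1 : K)) ''
        ↑(S.biUnion fun f => f.support)) := by
      rw [← hS, Submodule.span_le]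
      intro f hfS
      refine mem_ideal_span_monomial_image.mpr fun xi hxi => ⟨xi, ?_, le_refl _⟩
      exact_mod_cast Finset.mem_biUnion.mpr ⟨f, hfS, hxi⟩
    have := mem_ideal_span_monomial_image.mp (hIle hβ) β ?_
    · obtain ⟨g, hg, hgle⟩ := this
      exact ⟨g, by exact_mod_cast hg, hgle⟩
    · simp [support_monomial]

/-- the chain of elementary moves: from `x^g` (with `g 0 > 0`) to `x_j · x^g / x_0`. -/
lemma chain_move {I : Ideal (MvPolynomial (Fin (m + 1)) K)} (hI : IsStronglyStable I)
    {g : Fin (m + 1) →₀ ℕ} (hg : monomial g (1 : K) ∈ I) (h0 : 0 < g 0) (j : Fin (m + 1)) :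
    monomial (g - Finsupp.single 0 1 + Finsupp.single j 1) (1 : K) ∈ I := by
  induction j using Fin.induction with
  | zero =>
    have h1 : Finsupp.single (0 : Fin (m+1)) 1 ≤ g := Finsupp.single_le_iff.mpr h0
    rw [tsub_add_cancel_of_le h1]
    exact hg
  | succ i ih =>
    have hpos : 0 < ((g - Finsupp.single 0 1 + Finsupp.single i.castSucc 1 : Fin (m+1) →₀ ℕ)) i.castSucc := by
      simp [Finsupp.add_apply, Finsupp.single_apply]
    have := hI.2 _ ih i hpos
    rwa [upMove, add_tsub_cancel_right] at this
end Helpers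

section Helpers2

variable {m : ℕ} {K : Type*} [Field K]

lemma degree_add' (a b : Fin (m + 1) →₀ ℕ) : (a + b).degree = a.degree + b.degree := by
  simp [Finsupp.degree_eq_weight_one, map_add]

lemma degree_single_one (j : Fin (m + 1)) : (Finsupp.single j 1 : Fin (m+1) →₀ ℕ).degree = 1 := by
  rw [Finsupp.degree_single]

/-- Key combinatorial lemma: for a strongly stable ideal, if `deg γ ≥ D` (max degree of
generators) and `x^γ ∉ I` then `x_0 · x^γ ∉ I`. -/
lemma not_mem_mul_X0 {I : Ideal (MvPolynomial (Fin (m + 1)) K)} (hI : IsStronglyStable I)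
    {G : Finset (Fin (m + 1) →₀ ℕ)} (hG1 : ∀ g ∈ G, monomial g (1 : K) ∈ I)
    (hG2 : ∀ β : Fin (m + 1) →₀ ℕ, monomial β (1 : K) ∈ I → ∃ g ∈ G, g ≤ β)
    {γ : Fin (m + 1) →₀ ℕ} (hdeg : (G.sup fun g => g.degree) ≤ γ.degree)
    (hγ : monomial γ (1 : K) ∉ I) :
    monomial (γ + Finsupp.single 0 1) (1 : K) ∉ I := by
  intro hmem
  obtain ⟨g, hgG, hle⟩ := hG2 _ hmem
  have hlep : ∀ l, g l ≤ γ l + (Finsupp.single (0 : Fin (m+1)) 1) l := by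
    intro l
    have := hle l
    rwa [Finsupp.add_apply] at this
  by_cases hg0 : g 0 ≤ γ 0
  · refine hγ (mono_mem_of_le (hG1 g hgG) ?_)
    intro l
    by_cases hl : l = 0
    · subst hl; exact hg0
    · have := hlep l
      rwa [Finsupp.single_eq_of_ne' (Ne.symm hl), add_zero] at this
  · push_neg at hg0
    have hle0 : g 0 ≤ γ 0 + 1 := by
      have := hlep 0
      rwa [Finsupp.single_eq_same] at this
    have hg0' : g 0 = γ 0 + 1 := le_antisymm hle0 hg0
    have hexj : ∃ j, g j < γ j := by
      by_contra h
      push_neg at h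
      have hgeq : g = γ + Finsupp.single 0 1 := by
        refine le_antisymm hle ?_
        intro l
        rw [Finsupp.add_apply]
        by_cases hl : l = 0
        · subst hl; rw [Finsupp.single_eq_same]; omega
        · rw [Finsupp.single_eq_of_ne' (Ne.symm hl), add_zero]; exact h l
      have hdg : g.degree = γ.degree + 1 := by
        rw [hgeq, degree_add', degree_single_one]
      have : g.degree ≤ γ.degree := le_trans (Finset.le_sup hgG) hdeg
      omega
    obtain ⟨j, hj⟩ := hexj
    have hjne : j ≠ 0 := by
      intro h; subst h; omega
    have hchain := chain_move hI (hG1 g hgG) (by omega) j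
    refine hγ (mono_mem_of_le hchain ?_)
    intro l
    rw [Finsupp.add_apply, Finsupp.tsub_apply]
    by_cases hl : l = 0
    · subst hl
      rw [Finsupp.single_eq_same, Finsupp.single_eq_of_ne' hjne, add_zero]
      omega
    · have h1 : (Finsupp.single (0 : Fin (m+1)) 1) l = 0 := Finsupp.single_eq_of_ne' (Ne.symm hl)
      have hgl := hlep l
      rw [h1, add_zero] at hgl
      rw [h1, Nat.sub_zero]
      by_cases hlj : l = j
      · subst hlj
        rw [Finsupp.single_eq_same]
        omega
      · rw [Finsupp.single_eq_of_ne' (Ne.symm hlj), add_zero]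
        exact hgl

end Helpers2

section Helpers3

variable {m : ℕ} {K : Type*} [Field K]

/-- A monomial with no `x_0` lying in `(x_0) + I` lies in `I`. -/
lemma mem_of_mem_sup {I : Ideal (MvPolynomial (Fin (m + 1) ) K)} (hIm : IsMonomialIdeal I)
    {β : Fin (m + 1) →₀ ℕ} (hβ0 : β 0 = 0)
    (h : monomial β (1 : K) ∈ Ideal.span {(X 0 : MvPolynomial (Fin (m + 1)) K)} ⊔ I) :
    monomial β (1 : K) ∈ I := by
  obtain ⟨y, hy, z, hz, hyz⟩ := Submodule.mem_sup.mp h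
  obtain ⟨a, rfl⟩ := Ideal.mem_span_singleton'.mp hy
  have hcy : coeff β (a * X 0) = 0 := by
    classical
    rw [coeff_mul_X']
    rw [if_neg (by simp [Finsupp.mem_support_iff, hβ0])]
  have hcz : coeff β z = 1 := by
    have := congrArg (coeff β) hyz
    rw [coeff_add, hcy, zero_add, coeff_monomial, if_pos rfl] at this
    exact this
  have hβz : β ∈ z.support := by
    rw [mem_support_iff, hcz]; exact one_ne_zero
  exact hIm z hz β hβz

/-- `(x_0) + I` is a monomial ideal. -/
lemma sup_isMonomialIdeal {I : Ideal (MvPolynomial (Fin (m + 1)) K)} (hIm : IsMonomialIdeal I) :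
    IsMonomialIdeal (Ideal.span {(X 0 : MvPolynomial (Fin (m + 1)) K)} ⊔ I) := by
  intro f hf d hd
  obtain ⟨y, hy, z, hz, hyz⟩ := Submodule.mem_sup.mp hf
  obtain ⟨a, rfl⟩ := Ideal.mem_span_singleton'.mp hy
  have hcd : coeff d f ≠ 0 := mem_support_iff.mp hd
  rw [← hyz, coeff_add] at hcd
  rcases (by by_contra hc; push_neg at hc; rw [hc.1, hc.2, add_zero] at hcd; exact hcd rfl :
      coeff d (a * X 0) ≠ 0 ∨ coeff d z ≠ 0) with h1 | h2
  · classical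
    rw [coeff_mul_X'] at h1
    have hd0 : 0 < d 0 := by
      by_contra hd0
      rw [if_neg (by simp [Finsupp.mem_support_iff]; omega)] at h1
      exact h1 rfl
    have : monomial d (1 : K) = monomial (d - Finsupp.single 0 1) (1 : K) * X 0 := by
      rw [X, monomial_mul, one_mul, tsub_add_cancel_of_le (Finsupp.single_le_iff.mpr hd0)]
    rw [this]
    exact Submodule.mem_sup_left (Ideal.mul_mem_left _ _ (Ideal.subset_span rfl))
  · exact Submodule.mem_sup_right (hIm z hz d (mem_support_iff.mpr h2))

end Helpers3

section Card

variable {m : ℕ} {K : Type*} [Field K]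

lemma finite_subdeg (t : ℕ) (P : (Fin (m + 1) →₀ ℕ) → Prop) :
    Finite {β : Fin (m + 1) →₀ ℕ // β.degree = t ∧ P β} := by
  have hfin : {f : Fin (m + 1) →₀ ℕ | f.degree ≤ t}.Finite := Finsupp.finite_of_degree_le t
  have : Finite {f : Fin (m + 1) →₀ ℕ // f.degree ≤ t} := hfin.to_subtype
  exact Finite.of_injective
    (fun a => (⟨a.1, a.2.1.le⟩ : {f : Fin (m + 1) →₀ ℕ // f.degree ≤ t}))
    (by intro a b hab
        apply Subtype.ext
        have := Subtype.ext_iff.mp hab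
        exact this)

lemma hilb_card {I : Ideal (MvPolynomial (Fin (m + 1)) K)} (hIm : IsMonomialIdeal I) (t : ℕ) :
    hilbFun I t =
      Nat.card {β : Fin (m + 1) →₀ ℕ // β.degree = t ∧ monomial β (1 : K) ∉ I} := by
  classical
  set V := homogeneousSubmodule (Fin (m + 1)) K t with hV
  set W := Submodule.comap V.subtype (I.restrictScalars K) with hW
  set S := {β : Fin (m + 1) →₀ ℕ // β.degree = t ∧ monomial β (1 : K) ∉ I} with hS
  let v : S → V := fun β => ⟨monomial β.1 1, isHomogeneous_monomial 1 β.2.1⟩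
  let φ : (S →₀ K) →ₗ[K] V ⧸ W := W.mkQ.comp (Finsupp.linearCombination K v)
  have hφ : ∀ l : S →₀ K, φ l = W.mkQ (Finsupp.linearCombination K v l) := fun l => rfl
  have hval : ∀ l : S →₀ K, ((Finsupp.linearCombination K v l : V) : MvPolynomial (Fin (m+1)) K)
      = ∑ i ∈ l.support, l i • monomial i.1 (1 : K) := by
    intro l
    rw [Finsupp.linearCombination_apply, Finsupp.sum]
    push_cast
    rfl
  have hinj : Function.Injective φ := by
    rw [← LinearMap.ker_eq_bot]
    refine LinearMap.ker_eq_bot'.mpr fun l hl => ?_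
    have h0 : Finsupp.linearCombination K v l ∈ W := (Submodule.Quotient.mk_eq_zero W).mp hl
    have hmemI : ((Finsupp.linearCombination K v l : V) : MvPolynomial (Fin (m+1)) K) ∈ I := h0
    by_contra hlne
    obtain ⟨β₀, hβ₀⟩ := Finsupp.support_nonempty_iff.mpr hlne
    have hcoeff : coeff β₀.1 ((Finsupp.linearCombination K v l : V) :
        MvPolynomial (Fin (m+1)) K) = l β₀ := by
      rw [hval, coeff_sum]
      have hterm : ∀ i ∈ l.support,
          coeff β₀.1 (l i • monomial i.1 (1 : K)) = if i = β₀ then l i else 0 := by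
        intro i _
        rw [coeff_smul, coeff_monomial]
        by_cases h : i = β₀
        · subst h; simp
        · rw [if_neg (fun hh => h (Subtype.ext hh)), if_neg h, smul_zero]
      rw [Finset.sum_congr rfl hterm, Finset.sum_ite_eq' l.support β₀ fun i => l i,
        if_pos hβ₀]
    have hsupp : β₀.1 ∈ ((Finsupp.linearCombination K v l : V) :
        MvPolynomial (Fin (m+1)) K).support := by
      rw [mem_support_iff, hcoeff]
      exact Finsupp.mem_support_iff.mp hβ₀
    exact β₀.2.2 (hIm _ hmemI β₀.1 hsupp)
  have hsurj : Function.Surjective φ := by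
    intro x
    obtain ⟨fV, rfl⟩ := W.mkQ_surjective x
    obtain ⟨f, hf⟩ := fV
    have hdeg : ∀ d ∈ f.support, Finsupp.degree d = t := by
      intro d hd
      rw [Finsupp.degree_eq_weight_one]
      exact hf (mem_support_iff.mp hd)
    have hfsum : (⟨f, hf⟩ : V) = ∑ d ∈ f.support.attach,
        (coeff d.1 f) • (⟨monomial d.1 1, isHomogeneous_monomial 1 (hdeg d.1 d.2)⟩ : V) := by
      apply Subtype.ext
      push_cast
      rw [Finset.sum_attach f.support (fun d => coeff d f • monomial d (1 : K))]
      conv_lhs => rw [f.as_sum]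
      exact Finset.sum_congr rfl fun d _ => by rw [smul_monomial, smul_eq_mul, mul_one]
    have hrange : W.mkQ (⟨f, hf⟩ : V) ∈ LinearMap.range φ := by
      rw [hfsum, map_sum]
      apply Submodule.sum_mem
      intro d _
      rw [map_smul]
      apply Submodule.smul_mem
      by_cases hdI : monomial d.1 (1 : K) ∈ I
      · have hdW : (⟨monomial d.1 1, isHomogeneous_monomial 1 (hdeg d.1 d.2)⟩ : V) ∈ W := hdI
        rw [show W.mkQ (⟨monomial d.1 1, isHomogeneous_monomial 1 (hdeg d.1 d.2)⟩ : V) = 0 from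
          (Submodule.Quotient.mk_eq_zero W).mpr hdW]
        exact zero_mem _
      · refine ⟨Finsupp.single (⟨d.1, hdeg d.1 d.2, hdI⟩ : S) 1, ?_⟩
        rw [hφ, Finsupp.linearCombination_single, one_smul]
    obtain ⟨l, hl⟩ := hrange
    exact ⟨l, hl⟩
  have heq := LinearEquiv.finrank_eq (LinearEquiv.ofBijective φ ⟨hinj, hsurj⟩)
  have : Finite S := finite_subdeg t _
  letI : Fintype S := Fintype.ofFinite S
  show Module.finrank K (↥V ⧸ W) = Nat.card S
  rw [← heq, Module.finrank_finsupp_self, Nat.card_eq_fintype_card]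

end Card

section Helpers4

lemma degree_eq_sum {σ : Type*} (γ : σ →₀ ℕ) : γ.degree = γ.sum fun _ e => e := rfl

lemma degree_mapDomain {n : ℕ} (β : Fin (n + 1) →₀ ℕ) :
    (Finsupp.mapDomain (Fin.succ : Fin (n+1) → Fin (n+2)) β).degree = β.degree := by
  rw [degree_eq_sum, degree_eq_sum]
  exact Finsupp.sum_mapDomain_index (fun _ => rfl) (fun _ _ _ => rfl)

lemma mapDomain_zero_apply {n : ℕ} (β : Fin (n + 1) →₀ ℕ) :
    (Finsupp.mapDomain (Fin.succ : Fin (n+1) → Fin (n+2)) β) 0 = 0 :=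
  Finsupp.mapDomain_notin_range _ _ (by
    rintro ⟨k, hk⟩
    exact Fin.succ_ne_zero k hk)

lemma mapDomain_succ_apply {n : ℕ} (β : Fin (n + 1) →₀ ℕ) (j : Fin (n + 1)) :
    (Finsupp.mapDomain (Fin.succ : Fin (n+1) → Fin (n+2)) β) j.succ = β j :=
  Finsupp.mapDomain_apply (Fin.succ_injective _) β j

lemma mapDomain_upMove {n : ℕ} (i : Fin n) (α : Fin (n + 1) →₀ ℕ) :
    Finsupp.mapDomain (Fin.succ : Fin (n+1) → Fin (n+2)) (upMove i α) =
      upMove i.succ (Finsupp.mapDomain (Fin.succ : Fin (n+1) → Fin (n+2)) α) := by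
  classical
  ext j
  rcases Fin.eq_zero_or_eq_succ j with rfl | ⟨k, rfl⟩
  · rw [mapDomain_zero_apply, upMove, Finsupp.add_apply, Finsupp.tsub_apply,
      mapDomain_zero_apply,
      Finsupp.single_eq_of_ne' (by rw [← Fin.succ_castSucc]; exact (Fin.succ_ne_zero _)),
      Finsupp.single_eq_of_ne' (Fin.succ_ne_zero _)]
    simp
  · rw [mapDomain_succ_apply, upMove, upMove, Finsupp.add_apply, Finsupp.add_apply,
      Finsupp.tsub_apply, Finsupp.tsub_apply, mapDomain_succ_apply]
    congr 1
    · congr 1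
      rw [← Fin.succ_castSucc]
      by_cases h : i.castSucc = k
      · subst h; rw [Finsupp.single_eq_same, Finsupp.single_eq_same]
      · rw [Finsupp.single_eq_of_ne' h, Finsupp.single_eq_of_ne'
          (fun hc => h (Fin.succ_injective _ hc))]
    · by_cases h : i.succ = k
      · subst h; rw [Finsupp.single_eq_same, Finsupp.single_eq_same]
      · rw [Finsupp.single_eq_of_ne' h, Finsupp.single_eq_of_ne'
          (fun hc => h (Fin.succ_injective _ hc))]

end Helpers4

section Main

variable {n : ℕ} {K : Type*} [Field K]

lemma mem_section_iff {I : Ideal (MvPolynomial (Fin (n + 1 + 1)) K)} (hIm : IsMonomialIdeal I)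
    {I' : Ideal (MvPolynomial (Fin (n + 1)) K)}
    (hI' : I' = Ideal.comap
      (rename (Fin.succ : Fin (n + 1) → Fin (n + 1 + 1)) :
        MvPolynomial (Fin (n + 1)) K →ₐ[K] MvPolynomial (Fin (n + 1 + 1)) K)
      (Ideal.span {(X 0 : MvPolynomial (Fin (n + 1 + 1)) K)} ⊔ I))
    (β' : Fin (n + 1) →₀ ℕ) :
    monomial β' (1 : K) ∈ I' ↔ monomial (Finsupp.mapDomain Fin.succ β') (1 : K) ∈ I := by
  subst hI'
  rw [Ideal.mem_comap, show ((rename (Fin.succ : Fin (n+1) → Fin (n+1+1)) :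
      MvPolynomial (Fin (n + 1)) K →ₐ[K] MvPolynomial (Fin (n + 1 + 1)) K) (monomial β' 1)) =
      monomial (Finsupp.mapDomain Fin.succ β') (1 : K) from rename_monomial _ _ _]
  exact ⟨fun h => mem_of_mem_sup hIm (mapDomain_zero_apply β') h,
    fun h => Submodule.mem_sup_right h⟩

lemma section_stronglyStable {I : Ideal (MvPolynomial (Fin (n + 1 + 1)) K)}
    (hI : IsStronglyStable I)
    {I' : Ideal (MvPolynomial (Fin (n + 1)) K)}
    (hI' : I' = Ideal.comap
      (rename (Fin.succ : Fin (n + 1) → Fin (n + 1 + 1)) :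
        MvPolynomial (Fin (n + 1)) K →ₐ[K] MvPolynomial (Fin (n + 1 + 1)) K)
      (Ideal.span {(X 0 : MvPolynomial (Fin (n + 1 + 1)) K)} ⊔ I)) :
    IsStronglyStable I' := by
  obtain ⟨hIm, hIs⟩ := hI
  constructor
  · intro f hf d hd
    rw [hI', Ideal.mem_comap] at hf ⊢
    rw [rename_monomial]
    classical
    have hsupp : Finsupp.mapDomain Fin.succ d ∈
        ((rename (Fin.succ : Fin (n+1) → Fin (n+1+1)) f).support) := by
      rw [MvPolynomial.support_rename_of_injective (Fin.succ_injective _)]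
      exact Finset.mem_image_of_mem _ hd
    exact sup_isMonomialIdeal hIm _ hf _ hsupp
  · intro α' hα' i hpos
    have hβ : monomial (Finsupp.mapDomain Fin.succ α') (1 : K) ∈ I :=
      (mem_section_iff hIm hI' α').mp hα'
    have hposβ : 0 < (Finsupp.mapDomain Fin.succ α') i.succ.castSucc := by
      rw [← Fin.succ_castSucc, mapDomain_succ_apply]
      exact hpos
    have hmv := hIs _ hβ i.succ hposβ
    rw [← mapDomain_upMove] at hmv
    exact (mem_section_iff hIm hI' _).mpr hmv

end Main

section Count

variable {n : ℕ} {K : Type*} [Field K]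

lemma card_section {I : Ideal (MvPolynomial (Fin (n + 1 + 1)) K)} (hI : IsStronglyStable I)
    {I' : Ideal (MvPolynomial (Fin (n + 1)) K)}
    (hI' : I' = Ideal.comap
      (rename (Fin.succ : Fin (n + 1) → Fin (n + 1 + 1)) :
        MvPolynomial (Fin (n + 1)) K →ₐ[K] MvPolynomial (Fin (n + 1 + 1)) K)
      (Ideal.span {(X 0 : MvPolynomial (Fin (n + 1 + 1)) K)} ⊔ I))
    {G : Finset (Fin (n + 1 + 1) →₀ ℕ)} (hG1 : ∀ g ∈ G, monomial g (1 : K) ∈ I)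
    (hG2 : ∀ β : Fin (n + 1 + 1) →₀ ℕ, monomial β (1 : K) ∈ I → ∃ g ∈ G, g ≤ β)
    {t : ℕ} (ht : (G.sup fun g => g.degree) + 1 ≤ t) :
    Nat.card {β : Fin (n + 1 + 1) →₀ ℕ // β.degree = t ∧ monomial β (1 : K) ∉ I} =
      Nat.card {γ : Fin (n + 1 + 1) →₀ ℕ // γ.degree = t - 1 ∧ monomial γ (1 : K) ∉ I} +
      Nat.card {β' : Fin (n + 1) →₀ ℕ // β'.degree = t ∧ monomial β' (1 : K) ∉ I'} := by
  classical
  obtain ⟨hIm, hIs⟩ := hI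
  set A : Type _ := {β : Fin (n + 1 + 1) →₀ ℕ // β.degree = t ∧ monomial β (1 : K) ∉ I}
    with hA
  have finA : Finite A := finite_subdeg t _
  -- the split
  have hsplit : Nat.card A =
      Nat.card {a : A // a.1 0 = 0} + Nat.card {a : A // ¬ a.1 0 = 0} := by
    have h := Nat.card_congr (Equiv.sumCompl fun a : A => a.1 0 = 0)
    rw [Nat.card_sum] at h
    exact h.symm
  -- the x0-divisible part
  have hcardB : Nat.card {γ : Fin (n + 1 + 1) →₀ ℕ // γ.degree = t - 1 ∧
      monomial γ (1 : K) ∉ I} = Nat.card {a : A // ¬ a.1 0 = 0} := by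
    refine Nat.card_eq_of_bijective (fun b => ⟨⟨b.1 + Finsupp.single 0 1, ?_, ?_⟩, ?_⟩) ⟨?_, ?_⟩
    · rw [degree_add', degree_single_one, b.2.1]
      omega
    · exact not_mem_mul_X0 ⟨hIm, hIs⟩ hG1 hG2 (by rw [b.2.1]; omega) b.2.2
    · show ¬ ((b.1 + Finsupp.single 0 1 : Fin (n+1+1) →₀ ℕ)) 0 = 0
      rw [Finsupp.add_apply, Finsupp.single_eq_same]
      omega
    · intro b₁ b₂ hb
      apply Subtype.ext
      have : b₁.1 + Finsupp.single 0 1 = b₂.1 + Finsupp.single 0 1 :=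
        Subtype.ext_iff.mp (Subtype.ext_iff.mp hb)
      exact add_right_cancel this
    · rintro ⟨⟨β, hβdeg, hβI⟩, hβ0⟩
      simp only at hβ0
      have hβ0' : 0 < β 0 := Nat.pos_of_ne_zero hβ0
      have hle : Finsupp.single (0 : Fin (n + 1 + 1)) 1 ≤ β := Finsupp.single_le_iff.mpr hβ0'
      have hcan : (β - Finsupp.single 0 1) + Finsupp.single 0 1 = β := tsub_add_cancel_of_le hle
      have hdegγ : (β - Finsupp.single 0 1 : Fin (n+1+1) →₀ ℕ).degree = t - 1 := by
        have := degree_add' (β - Finsupp.single 0 1) (Finsupp.single 0 1)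
        rw [hcan, degree_single_one, hβdeg] at this
        omega
      have hγI : monomial (β - Finsupp.single 0 1 : Fin (n+1+1) →₀ ℕ) (1 : K) ∉ I := by
        intro h
        exact hβI (mono_mem_of_le h tsub_le_self)
      exact ⟨⟨β - Finsupp.single 0 1, hdegγ, hγI⟩, Subtype.ext (Subtype.ext hcan)⟩
  -- the x0-free part
  have hcardC : Nat.card {β' : Fin (n + 1) →₀ ℕ // β'.degree = t ∧ monomial β' (1 : K) ∉ I'} =
      Nat.card {a : A // a.1 0 = 0} := by
    refine Nat.card_eq_of_bijective
      (fun c => ⟨⟨Finsupp.mapDomain Fin.succ c.1, ?_, ?_⟩, mapDomain_zero_apply c.1⟩) ⟨?_, ?_⟩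
    · rw [degree_mapDomain]; exact c.2.1
    · exact fun h => c.2.2 ((mem_section_iff hIm hI' c.1).mpr h)
    · intro c₁ c₂ hc
      apply Subtype.ext
      exact Finsupp.mapDomain_injective (Fin.succ_injective _)
        (Subtype.ext_iff.mp (Subtype.ext_iff.mp hc))
    · rintro ⟨⟨β, hβdeg, hβI⟩, hβ0⟩
      simp only at hβ0
      have hsupp : ↑β.support ⊆ Set.range (Fin.succ : Fin (n+1) → Fin (n+1+1)) := by
        intro d hd
        have hd0 : d ≠ 0 := by
          intro h
          subst h
          exact absurd hβ0 (Finsupp.mem_support_iff.mp hd)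
        obtain ⟨k, hk⟩ := Fin.eq_succ_of_ne_zero hd0
        exact ⟨k, hk.symm⟩
      set β' := Finsupp.comapDomain Fin.succ β (Fin.succ_injective _).injOn with hβ'
      have hmap : Finsupp.mapDomain Fin.succ β' = β :=
        Finsupp.mapDomain_comapDomain Fin.succ (Fin.succ_injective _) β hsupp
      refine ⟨⟨β', ?_, ?_⟩, Subtype.ext (Subtype.ext hmap)⟩
      · rw [← degree_mapDomain β', hmap]; exact hβdeg
      · intro h
        exact hβI (by rw [← hmap]; exact (mem_section_iff hIm hI' β').mp h)
  rw [hsplit, hcardB, hcardC, Nat.add_comm]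

end Count


/-- If `I ⊂ K[x_0,…,x_{n+1}]` is strongly stable with Hilbert polynomial `p(t)`, then
`I' = (x_0, I) ∩ K[x_1,…,x_{n+1}]` is a strongly stable ideal of `K[x_1,…,x_{n+1}]`
whose quotient has Hilbert polynomial `Δp(t) = p(t) − p(t−1)`. Here
`K[x_1,…,x_{n+1}]` is embedded in `K[x_0,…,x_{n+1}]` via `x_i ↦ x_{i+1}`. -/
theorem section_stronglyStable_hilbertPolynomial {n : ℕ} {K : Type*} [Field K]
    (I : Ideal (MvPolynomial (Fin (n + 1 + 1)) K)) (hI : IsStronglyStable I)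
    (p : Polynomial ℚ)
    (hp : ∃ N : ℕ, ∀ t : ℕ, N ≤ t → (hilbFun I t : ℚ) = p.eval (t : ℚ))
    (I' : Ideal (MvPolynomial (Fin (n + 1)) K))
    (hI' : I' = Ideal.comap
      (rename (Fin.succ : Fin (n + 1) → Fin (n + 1 + 1)) :
        MvPolynomial (Fin (n + 1)) K →ₐ[K] MvPolynomial (Fin (n + 1 + 1)) K)
      (Ideal.span {(X 0 : MvPolynomial (Fin (n + 1 + 1)) K)} ⊔ I)) :
    IsStronglyStable I' ∧
      ∃ N : ℕ, ∀ t : ℕ, N ≤ t →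
        (hilbFun I' t : ℚ) = p.eval (t : ℚ) - p.eval ((t : ℚ) - 1) := by
  obtain ⟨N, hN⟩ := hp
  have hIs' : IsStronglyStable I' := section_stronglyStable hI hI'
  obtain ⟨G, hG1, hG2⟩ := exists_monomial_gens hI.1
  set D := G.sup fun g => g.degree with hD
  refine ⟨hIs', N + D + 1, fun t ht => ?_⟩
  have ht1 : 1 ≤ t := by omega
  have htD : D + 1 ≤ t := by omega
  have htN : N ≤ t := by omega
  have htN' : N ≤ t - 1 := by omega
  have hA := hilb_card (m := n + 1) hI.1 t
  have hB := hilb_card (m := n + 1) hI.1 (t - 1)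
  have hC := hilb_card (m := n) hIs'.1 t
  have hkey := card_section hI hI' hG1 hG2 htD
  have e1 := hN t htN
  have e2 := hN (t - 1) htN'
  have hcast : ((t - 1 : ℕ) : ℚ) = (t : ℚ) - 1 := by
    push_cast [ht1]
    ring
  rw [hC]
  rw [hA, hkey] at e1
  rw [hB, hcast] at e2
  push_cast at e1 e2 ⊢
  linarith
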